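/- Let n ≥ 2 and k ≥ 2 with ((k−1)/k)·n − √(n·log n) > 0 (real logarithm). Then every pseudo-PI-sequence with n states and k actions has size m ≤ k^n/n² + k^n/(((k−1)/k)·n − √(n·log n)) + 1. -/

import Mathlib

/-- A pseudo-PI-sequence of size `m` with `n` states and `k` actions:
a sequence of policies `σ 0, …, σ (L-1)` together with an improvement-set
assignment `T` satisfying the non-inclusion property, and a strictly
increasing choice of indices `idx 0 < … < idx (m-1)` satisfying the
jumping property. -/
structure PseudoPISeq (n k m : ℕ) where
  /-- length of the underlying sequence of policies -/
  L : ℕ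
  /-- the underlying sequence of policies -/
  σ : Fin L → Fin n → Fin k
  /-- the improvement-set assignment -/
  T : Fin L → Set (Fin n × Fin k)
  /-- improvement sets never contain the currently chosen action -/
  hT : ∀ t s, (s, σ t s) ∉ T t
  /-- the non-inclusion property: for `t < t'` there is an improvement state `s` of
  `σ t` with `σ t s ≠ σ t' s` and `(s, σ t s) ∉ T t'` -/
  nonincl : ∀ t t' : Fin L, t < t' →
    ∃ s, (∃ a, (s, a) ∈ T t) ∧ σ t s ≠ σ t' s ∧ (s, σ t s) ∉ T t'
  /-- the selected indices `t_0 < t_1 < … < t_{m-1}` -/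
  idx : Fin m → Fin L
  idx_mono : StrictMono idx
  /-- the jumping property: `t_{j+1} - t_j ≥ |S_{t_j}| + 1` -/
  jump : ∀ j : ℕ, ∀ hj : j + 1 < m,
    (idx ⟨j, Nat.lt_of_succ_lt hj⟩ : ℕ) +
      {s | ∃ a, (s, a) ∈ T (idx ⟨j, Nat.lt_of_succ_lt hj⟩)}.ncard + 1 ≤
      (idx ⟨j + 1, hj⟩ : ℕ)


section PseudoPIAux

open Real Finset


lemma bern_hoeff (p : ℝ) (hp0 : 0 < p) (hp1 : p < 1) {l : ℝ} (hl : 0 ≤ l) :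
    1 - p + p * Real.exp (-l) ≤ Real.exp (-(p*l) + l^2/8) := by
  set G : ℝ → ℝ := fun x => 1 - p + p * Real.exp (-x) with hGdef
  have hGpos : ∀ x, 0 < G x := fun x => by
    have := Real.exp_pos (-x)
    have : 0 < p * Real.exp (-x) := mul_pos hp0 this
    simp only [hGdef]; linarith
  have hGderiv : ∀ x, HasDerivAt G (-(p * Real.exp (-x))) x := by
    intro x
    have h1 : HasDerivAt (fun x : ℝ => -x) (-1) x := (hasDerivAt_id x).neg
    have h2 : HasDerivAt (fun x : ℝ => Real.exp (-x)) (Real.exp (-x) * (-1)) x :=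
      (Real.hasDerivAt_exp (-x)).comp x h1
    have h3 : HasDerivAt (fun x : ℝ => p * Real.exp (-x)) (p * (Real.exp (-x) * (-1))) x :=
      h2.const_mul p
    have h4 := (h3.const_add (1 - p))
    exact h4.congr_deriv (by ring)
  -- F2 : derivative of F
  set F2 : ℝ → ℝ := fun x => -(p * Real.exp (-x)) / G x + p - x/4 with hF2def
  set F : ℝ → ℝ := fun x => Real.log (G x) + p * x - x^2/8 with hFdef
  have hFderiv : ∀ x, HasDerivAt F (F2 x) x := by
    intro x
    have hlog : HasDerivAt (fun x => Real.log (G x)) (-(p * Real.exp (-x)) / G x) x :=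
      (hGderiv x).log (hGpos x).ne'
    have h5 : HasDerivAt (fun x : ℝ => p * x) p x := by
      simpa using (hasDerivAt_id x).const_mul p
    have h6 : HasDerivAt (fun x : ℝ => x^2/8) (x/4) x := by
      have := (hasDerivAt_pow 2 x).div_const 8
      exact this.congr_deriv (by ring)
    have := (hlog.add h5).sub h6
    exact this
  have hF2deriv : ∀ x, HasDerivAt F2 (p * Real.exp (-x) * (1-p) / (G x)^2 - 1/4) x := by
    intro x
    have hnum : HasDerivAt (fun x : ℝ => -(p * Real.exp (-x))) (p * Real.exp (-x)) x := by
      have h2 : HasDerivAt (fun x : ℝ => Real.exp (-x)) (Real.exp (-x) * (-1)) x :=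
        (Real.hasDerivAt_exp (-x)).comp x ((hasDerivAt_id x).neg)
      have := (h2.const_mul p).neg
      exact this.congr_deriv (by ring)
    have hdiv : HasDerivAt (fun x => -(p * Real.exp (-x)) / G x)
        ((p * Real.exp (-x) * G x - (-(p * Real.exp (-x))) * (-(p * Real.exp (-x)))) / (G x)^2) x :=
      hnum.div (hGderiv x) (hGpos x).ne'
    have h7 : HasDerivAt (fun x : ℝ => x/4) (1/4) x := by
      simpa using (hasDerivAt_id x).div_const 4
    have := (hdiv.const_add p ).sub h7 -- careful: F2 x = -(..)/G + p - x/4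
    have h8 : HasDerivAt F2 ((p * Real.exp (-x) * G x - (-(p * Real.exp (-x))) * (-(p * Real.exp (-x)))) / (G x)^2 - 1/4) x := by
      have heq : F2 = fun x => (p + -(p * Real.exp (-x)) / G x) - x/4 := by
        funext y; simp only [hF2def]; ring
      rw [heq]
      exact ((hdiv.const_add p)).sub h7
    refine h8.congr_deriv ?_
    have hG : G x = 1 - p + p * Real.exp (-x) := rfl
    field_simp
    ring
  have hF2nonpos : ∀ x, p * Real.exp (-x) * (1-p) / (G x)^2 - 1/4 ≤ 0 := by
    intro x
    rw [sub_nonpos, div_le_iff₀ (pow_pos (hGpos x) 2)]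
    have h := sq_nonneg ((1-p) - p * Real.exp (-x))
    have hG : G x = 1 - p + p * Real.exp (-x) := rfl
    nlinarith [sq_nonneg ((1-p) - p * Real.exp (-x))]
  have hF2anti : AntitoneOn F2 (Set.Ici (0:ℝ)) := by
    apply antitoneOn_of_deriv_nonpos (convex_Ici 0)
    · exact fun x _ => (hF2deriv x).continuousAt.continuousWithinAt
    · exact fun x _ => (hF2deriv x).differentiableAt.differentiableWithinAt
    · intro x _
      rw [(hF2deriv x).deriv]
      exact hF2nonpos x
  have hF20 : F2 0 = 0 := by
    simp only [hF2def]
    have : G 0 = 1 := by simp [hGdef]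
    rw [this]; simp
  have hF2le : ∀ x ∈ Set.Ici (0:ℝ), F2 x ≤ 0 := by
    intro x hx
    calc F2 x ≤ F2 0 := hF2anti (Set.self_mem_Ici) hx hx
    _ = 0 := hF20
  have hFanti : AntitoneOn F (Set.Ici (0:ℝ)) := by
    apply antitoneOn_of_deriv_nonpos (convex_Ici 0)
    · exact fun x _ => (hFderiv x).continuousAt.continuousWithinAt
    · exact fun x _ => (hFderiv x).differentiableAt.differentiableWithinAt
    · intro x hx
      rw [(hFderiv x).deriv]
      exact hF2le x (le_of_lt (by simpa using hx))
  have hF0 : F 0 = 0 := by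
    have : G 0 = 1 := by simp [hGdef]
    simp only [hFdef, this]; simp
  have hFle : F l ≤ 0 := by
    calc F l ≤ F 0 := hFanti Set.self_mem_Ici hl hl
    _ = 0 := hF0
  have : Real.log (G l) ≤ -(p*l) + l^2/8 := by
    simp only [hFdef] at hFle; linarith
  calc 1 - p + p * Real.exp (-l) = G l := rfl
    _ = Real.exp (Real.log (G l)) := (Real.exp_log (hGpos l)).symm
    _ ≤ Real.exp (-(p*l) + l^2/8) := Real.exp_le_exp.2 this

lemma tail_bound (n k d : ℕ) (hn : 1 ≤ n) (hk : 2 ≤ k)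
    (hd : (d:ℝ) ≤ ((k:ℝ)-1)/k * n) :
    ∑ i ∈ Finset.range (d+1), (n.choose i : ℝ) * ((k:ℝ)-1)^i ≤
      (k:ℝ)^n * Real.exp (-2*(((k:ℝ)-1)/k * n - d)^2 / n) := by
  have hk1 : (1:ℝ) ≤ (k:ℝ) - 1 := by
    have : (2:ℝ) ≤ k := by exact_mod_cast hk
    linarith
  have hkpos : (0:ℝ) < k := by linarith
  set p : ℝ := ((k:ℝ)-1)/k with hpdef
  have hp0 : 0 < p := div_pos (by linarith) hkpos
  have hp1 : p < 1 := by
    rw [hpdef, div_lt_one hkpos]; linarith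
  have hnpos : (0:ℝ) < n := by exact_mod_cast hn
  set t : ℝ := p * n - d with htdef
  have ht0 : 0 ≤ t := by rw [htdef]; linarith [hd]
  set lam : ℝ := 4 * t / n with hlamdef
  have hlam0 : 0 ≤ lam := by positivity
  have hdn : d ≤ n := by
    have : (d:ℝ) ≤ (n:ℝ) := by
      calc (d:ℝ) ≤ p * n := hd
      _ ≤ 1 * n := by apply mul_le_mul_of_nonneg_right (le_of_lt hp1) (le_of_lt hnpos)
      _ = n := one_mul _
    exact_mod_cast this
  have step1 : ∑ i ∈ Finset.range (d+1), (n.choose i : ℝ) * ((k:ℝ)-1)^i ≤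
      ∑ i ∈ Finset.range (d+1), (n.choose i : ℝ) * ((k:ℝ)-1)^i * Real.exp (lam * (d - i)) := by
    apply Finset.sum_le_sum
    intro i hi
    have hi' : (i:ℝ) ≤ d := by
      have := Finset.mem_range.1 hi; exact_mod_cast Nat.lt_succ_iff.1 this
    have h1 : (1:ℝ) ≤ Real.exp (lam * (d - i)) := by
      rw [Real.one_le_exp_iff]
      apply mul_nonneg hlam0; linarith
    have hnn : (0:ℝ) ≤ (n.choose i : ℝ) * ((k:ℝ)-1)^i := by positivity
    nlinarith [hnn]
  have step2 : ∑ i ∈ Finset.range (d+1), (n.choose i : ℝ) * ((k:ℝ)-1)^i * Real.exp (lam * (d - i)) ≤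
      ∑ i ∈ Finset.range (n+1), (n.choose i : ℝ) * ((k:ℝ)-1)^i * Real.exp (lam * (d - i)) := by
    refine Finset.sum_le_sum_of_subset_of_nonneg (Finset.range_subset_range.2 (by omega)) ?_
    intro i _ _; positivity
  have step3 : ∑ i ∈ Finset.range (n+1), (n.choose i : ℝ) * ((k:ℝ)-1)^i * Real.exp (lam * (d - i)) =
      Real.exp (lam * d) * (((k:ℝ)-1) * Real.exp (-lam) + 1)^n := by
    rw [add_pow]
    rw [Finset.mul_sum]
    apply Finset.sum_congr rfl
    intro i _
    rw [mul_pow, ← Real.exp_nat_mul]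
    have : Real.exp (lam * (d - i)) = Real.exp (lam * d) * Real.exp (-lam * i) := by
      rw [← Real.exp_add]; ring_nf
    rw [this]
    simp only [one_pow]
    ring_nf
  have key : ((k:ℝ)-1) * Real.exp (-lam) + 1 ≤ (k:ℝ) * Real.exp (-(p*lam) + lam^2/8) := by
    have hb := bern_hoeff p hp0 hp1 hlam0
    have : ((k:ℝ)-1) * Real.exp (-lam) + 1 = (k:ℝ) * (1 - p + p * Real.exp (-lam)) := by
      rw [hpdef]
      field_simp
      ring
    rw [this]
    exact mul_le_mul_of_nonneg_left hb (le_of_lt hkpos)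
  have step4 : (((k:ℝ)-1) * Real.exp (-lam) + 1)^n ≤ (k:ℝ)^n * Real.exp (n * (-(p*lam) + lam^2/8)) := by
    calc (((k:ℝ)-1) * Real.exp (-lam) + 1)^n ≤ ((k:ℝ) * Real.exp (-(p*lam) + lam^2/8))^n := by
          apply pow_le_pow_left₀ (by positivity) key n
    _ = (k:ℝ)^n * Real.exp (n * (-(p*lam) + lam^2/8)) := by
          rw [mul_pow, ← Real.exp_nat_mul]
  have hexp : lam * d + n * (-(p*lam) + lam^2/8) = -2*t^2/n := by
    rw [hlamdef, htdef]
    field_simp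
    ring
  calc ∑ i ∈ Finset.range (d+1), (n.choose i : ℝ) * ((k:ℝ)-1)^i
      ≤ Real.exp (lam * d) * (((k:ℝ)-1) * Real.exp (-lam) + 1)^n := by
        rw [← step3]; exact le_trans step1 step2
    _ ≤ Real.exp (lam * d) * ((k:ℝ)^n * Real.exp (n * (-(p*lam) + lam^2/8))) := by
        apply mul_le_mul_of_nonneg_left step4 (le_of_lt (Real.exp_pos _))
    _ = (k:ℝ)^n * Real.exp (lam * d + n * (-(p*lam) + lam^2/8)) := by
        rw [Real.exp_add]; ring
    _ = (k:ℝ)^n * Real.exp (-2*t^2/n) := by rw [hexp]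
    _ = (k:ℝ)^n * Real.exp (-2*(((k:ℝ)-1)/k * n - d)^2 / n) := by rw [htdef, hpdef]


variable {n k : ℕ}

/-- basis-difference function -/
noncomputable def ee (a0 a : Fin k) : Fin k → ℝ :=
  fun b => (if b = a then (1:ℝ) else 0) - (if b = a0 then (1:ℝ) else 0)

/-- product generator -/
noncomputable def GG (a0 : Fin k) (S : Finset (Fin n)) (φ : Fin n → Fin k) :
    (Fin n → Fin k) → ℝ :=
  fun x => ∏ s ∈ S, ee a0 (φ s) (x s)

lemma ee_self (a0 : Fin k) : ee a0 a0 = 0 := by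
  funext b; simp [ee]

lemma prod_mem_span (a0 : Fin k) (S : Finset (Fin n)) (h : Fin n → Fin k → ℝ)
    (hh : ∀ s ∈ S, h s ∈ Submodule.span ℝ (Set.range (ee a0))) :
    (fun x => ∏ s ∈ S, h s (x s)) ∈ Submodule.span ℝ (Set.range (GG a0 S)) := by
  classical
  induction S using Finset.induction_on with
  | empty =>
    have : (fun x : Fin n → Fin k => ∏ s ∈ (∅ : Finset (Fin n)), h s (x s)) = GG a0 ∅ (fun _ => a0) := by
      funext x; simp [GG]
    rw [this]
    exact Submodule.subset_span ⟨_, rfl⟩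
  | insert s₀ S' hs₀ ih =>
    have hrest : (fun x => ∏ s ∈ S', h s (x s)) ∈ Submodule.span ℝ (Set.range (GG a0 S')) :=
      ih (fun s hs => hh s (mem_insert_of_mem hs))
    have hu : h s₀ ∈ Submodule.span ℝ (Set.range (ee a0)) := hh s₀ (mem_insert_self _ _)
    have aux : ∀ u ∈ Submodule.span ℝ (Set.range (ee a0)),
        ∀ r ∈ Submodule.span ℝ (Set.range (GG a0 S')),
        (fun x => u (x s₀) * r x) ∈ Submodule.span ℝ (Set.range (GG a0 (insert s₀ S'))) := by
      intro u hu
      refine Submodule.span_induction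
        (p := fun u _ => ∀ r ∈ Submodule.span ℝ (Set.range (GG a0 S')),
          (fun x => u (x s₀) * r x) ∈ Submodule.span ℝ (Set.range (GG a0 (insert s₀ S'))))
        ?_ ?_ ?_ ?_ hu
      · rintro _ ⟨a, rfl⟩ r hr
        refine Submodule.span_induction ?_ ?_ ?_ ?_ hr
        · rintro _ ⟨φ, rfl⟩
          have : (fun x => ee a0 a (x s₀) * GG a0 S' φ x)
              = GG a0 (insert s₀ S') (Function.update φ s₀ a) := by
            funext x
            simp only [GG]
            rw [Finset.prod_insert hs₀, Function.update_self]
            congr 1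
            apply Finset.prod_congr rfl
            intro s hs
            rw [Function.update_of_ne (by rintro rfl; exact hs₀ hs)]
          rw [this]
          exact Submodule.subset_span ⟨_, rfl⟩
        · have : (fun x => ee a0 a (x s₀) * (0 : (Fin n → Fin k) → ℝ) x) = 0 := by
            funext x; simp
          rw [this]; exact Submodule.zero_mem _
        · intro r1 r2 _ _ h1 h2
          have : (fun x => ee a0 a (x s₀) * (r1 + r2) x)
              = (fun x => ee a0 a (x s₀) * r1 x) + (fun x => ee a0 a (x s₀) * r2 x) := by
            funext x; simp [Pi.add_apply]; ring
          rw [this]; exact Submodule.add_mem _ h1 h2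
        · intro c r _ h1
          have : (fun x => ee a0 a (x s₀) * (c • r) x)
              = c • (fun x => ee a0 a (x s₀) * r x) := by
            funext x; simp [Pi.smul_apply, smul_eq_mul]; ring
          rw [this]; exact Submodule.smul_mem _ _ h1
      · intro r hr
        have : (fun x => (0 : Fin k → ℝ) (x s₀) * r x) = 0 := by funext x; simp
        rw [this]; exact Submodule.zero_mem _
      · intro u1 u2 _ _ h1 h2 r hr
        have : (fun x => (u1 + u2) (x s₀) * r x)
            = (fun x => u1 (x s₀) * r x) + (fun x => u2 (x s₀) * r x) := by
          funext x; simp [Pi.add_apply]; ring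
        rw [this]; exact Submodule.add_mem _ (h1 r hr) (h2 r hr)
      · intro c u _ h1 r hr
        have : (fun x : Fin n → Fin k => (c • u) (x s₀) * r x)
            = c • (fun x : Fin n → Fin k => u (x s₀) * r x) := by
          funext x; simp [Pi.smul_apply, smul_eq_mul]; ring
        rw [this]; exact Submodule.smul_mem _ _ (h1 r hr)
    have : (fun x : Fin n → Fin k => ∏ s ∈ insert s₀ S', h s (x s))
        = (fun x : Fin n → Fin k => h s₀ (x s₀) * ∏ s ∈ S', h s (x s)) := by
      funext x; rw [Finset.prod_insert hs₀]
    rw [this]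
    exact aux _ hu _ hrest

lemma finrank_span_GG (hk : 1 ≤ k) (a0 : Fin k) (S : Finset (Fin n)) :
    Module.finrank ℝ (Submodule.span ℝ (Set.range (GG a0 S))) ≤ (k-1)^S.card := by
  classical
  set 𝒢 : Finset ((Fin n → Fin k) → ℝ) :=
    (S.pi (fun _ => Finset.univ.erase a0)).image
      (fun φ' => GG a0 S (fun s => if h : s ∈ S then φ' s h else a0)) with h𝒢
  have hsub : Set.range (GG a0 S) ⊆
      ↑(Submodule.span ℝ (↑𝒢 : Set ((Fin n → Fin k) → ℝ))) := by
    rintro _ ⟨φ, rfl⟩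
    by_cases hc : ∀ s ∈ S, φ s ≠ a0
    · apply Submodule.subset_span
      simp only [h𝒢, Finset.coe_image, Set.mem_image, Finset.mem_coe]
      refine ⟨fun s _ => φ s, ?_, ?_⟩
      · rw [Finset.mem_pi]
        intro s hs
        exact Finset.mem_erase.2 ⟨hc s hs, Finset.mem_univ _⟩
      · funext x
        apply Finset.prod_congr rfl
        intro s hs
        simp only [dif_pos hs]
    · push_neg at hc
      obtain ⟨s, hs, hφs⟩ := hc
      have : GG a0 S φ = 0 := by
        funext x
        apply Finset.prod_eq_zero hs
        rw [hφs]
        simp [ee]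
      rw [this]
      exact Submodule.zero_mem _
  calc Module.finrank ℝ (Submodule.span ℝ (Set.range (GG a0 S)))
      ≤ Module.finrank ℝ (Submodule.span ℝ (↑𝒢 : Set ((Fin n → Fin k) → ℝ))) :=
        Submodule.finrank_mono (Submodule.span_le.2 hsub)
    _ ≤ 𝒢.card := finrank_span_finset_le_card 𝒢
    _ ≤ (S.pi (fun _ => Finset.univ.erase a0)).card := Finset.card_image_le
    _ = (k-1)^S.card := by
        rw [Finset.card_pi]
        rw [Finset.prod_congr rfl (fun s _ => by
          rw [Finset.card_erase_of_mem (Finset.mem_univ _), Finset.card_univ, Fintype.card_fin])]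
        exact Finset.prod_const _

lemma count_class {L : ℕ} (hk : 2 ≤ k) (σ : Fin L → Fin n → Fin k)
    (T : Fin L → Set (Fin n × Fin k)) (St : Fin L → Finset (Fin n))
    (hSt : ∀ t s, s ∈ St t ↔ ∃ a, (s, a) ∈ T t)
    (hT : ∀ t s, (s, σ t s) ∉ T t)
    (noninc : ∀ t t' : Fin L, t < t' →
      ∃ s, (∃ a, (s, a) ∈ T t) ∧ σ t s ≠ σ t' s ∧ (s, σ t s) ∉ T t')
    (S : Finset (Fin n)) (cl : Finset (Fin L)) (hcl : ∀ t ∈ cl, St t = S) :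
    cl.card ≤ (k-1)^S.card := by
  classical
  set a0 : Fin k := ⟨k-1, by omega⟩ with ha0
  set w : Fin L → Fin n → Fin k := fun t s =>
    if h : ∃ a, (s, a) ∈ T t then h.choose else σ t s with hw
  have hwT : ∀ t s, (∃ a, (s, a) ∈ T t) → (s, w t s) ∈ T t := by
    intro t s h
    simp only [hw, dif_pos h]
    exact h.choose_spec
  set hfun : Fin L → Fin n → Fin k → ℝ := fun t s b =>
    (if b = σ t s then (1:ℝ) else 0) - (if b = w t s then (1:ℝ) else 0) with hhfun
  set F : Fin L → (Fin n → Fin k) → ℝ := fun t x => ∏ s ∈ S, hfun t s (x s) with hF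
  have fact_diag : ∀ t ∈ cl, F t (σ t) = 1 := by
    intro t ht
    rw [hF]
    apply Finset.prod_eq_one
    intro s hs
    have hsSt : s ∈ St t := by rw [hcl t ht]; exact hs
    have hex : ∃ a, (s, a) ∈ T t := (hSt t s).1 hsSt
    have hne : σ t s ≠ w t s := by
      intro h
      exact hT t s (h ▸ hwT t s hex)
    simp only [hhfun, if_pos rfl, if_neg hne]
    norm_num
  have fact_tri : ∀ t t', t < t' → t ∈ cl → t' ∈ cl → F t' (σ t) = 0 := by
    intro t t' hlt ht ht'
    obtain ⟨s, hsS, hne, hnotin⟩ := noninc t t' hlt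
    have hsSt : s ∈ S := by rw [← hcl t ht]; exact (hSt t s).2 hsS
    rw [hF]
    apply Finset.prod_eq_zero hsSt
    have hne2 : σ t s ≠ w t' s := by
      intro h
      apply hnotin
      have hex : ∃ a, (s, a) ∈ T t' := by
        rw [← hSt t' s, hcl t' ht']
        exact hsSt
      exact h ▸ hwT t' s hex
    simp only [hhfun, if_neg hne, if_neg hne2]
    norm_num
  -- linear independence
  have hli : LinearIndependent ℝ (fun c : ↥cl => F c.val) := by
    rw [linearIndependent_iff']
    intro sfin g hsum i hi
    by_contra hgi
    set s' := sfin.filter (fun j => g j ≠ 0) with hs'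
    have hne' : s'.Nonempty := ⟨i, Finset.mem_filter.2 ⟨hi, hgi⟩⟩
    set j0 := s'.min' hne' with hj0
    have hj0s' : j0 ∈ s' := Finset.min'_mem s' hne'
    have hj0sfin : j0 ∈ sfin := Finset.mem_of_mem_filter j0 hj0s'
    have hgj0 : g j0 ≠ 0 := (Finset.mem_filter.1 hj0s').2
    have heval := congrFun hsum (σ j0.val)
    rw [Finset.sum_apply] at heval
    simp only [Pi.smul_apply, smul_eq_mul, Pi.zero_apply] at heval
    rw [Finset.sum_eq_single j0] at heval
    · rw [fact_diag j0.val j0.property, mul_one] at heval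
      exact hgj0 heval
    · intro j hj hjne
      by_cases hgj : g j = 0
      · rw [hgj, zero_mul]
      · have hjs' : j ∈ s' := Finset.mem_filter.2 ⟨hj, hgj⟩
        have : j0 ≤ j := Finset.min'_le s' j hjs'
        have hlt : j0 < j := lt_of_le_of_ne this (Ne.symm hjne)
        rw [fact_tri j0.val j.val hlt j0.property j.property, mul_zero]
    · intro h
      exact absurd hj0sfin h
  -- membership in span
  have hmem : ∀ t ∈ cl, F t ∈ Submodule.span ℝ (Set.range (GG a0 S)) := by
    intro t ht
    apply prod_mem_span a0 S (hfun t)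
    intro s hs
    have : hfun t s = ee a0 (σ t s) - ee a0 (w t s) := by
      funext b
      simp only [hhfun, ee, Pi.sub_apply]
      ring
    rw [this]
    exact Submodule.sub_mem _ (Submodule.subset_span ⟨_, rfl⟩) (Submodule.subset_span ⟨_, rfl⟩)
  -- conclude
  set W := Submodule.span ℝ (Set.range (GG a0 S)) with hW
  have hv' : LinearIndependent ℝ (fun c : ↥cl => (⟨F c.val, hmem c.val c.property⟩ : W)) := by
    apply LinearIndependent.of_comp W.subtype
    exact hli
  calc cl.card = Fintype.card ↥cl := (Fintype.card_coe cl).symm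
    _ ≤ Module.finrank ℝ W := hv'.fintype_card_le_finrank
    _ ≤ (k-1)^S.card := finrank_span_GG (by omega) a0 S

set_option maxHeartbeats 1000000 in
theorem pseudoPI_upper_bound (n k m : ℕ) (hn : 2 ≤ n) (hk : 2 ≤ k)
    (hpos : 0 < ((k : ℝ) - 1) / k * n - Real.sqrt (n * Real.log n))
    (p : PseudoPISeq n k m) :
    (m : ℝ) ≤ (k : ℝ) ^ n / (n : ℝ) ^ 2 +
      (k : ℝ) ^ n / (((k : ℝ) - 1) / k * n - Real.sqrt (n * Real.log n)) + 1 := by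
  classical
  set D : ℝ := ((k : ℝ) - 1) / k * n - Real.sqrt (n * Real.log n) with hD
  have hkR : (2:ℝ) ≤ (k:ℝ) := by exact_mod_cast hk
  have hnR : (2:ℝ) ≤ (n:ℝ) := by exact_mod_cast hn
  have hn1 : (1:ℝ) < (n:ℝ) := by linarith
  have hkn_pos : (0:ℝ) < (k:ℝ)^n := by positivity
  have hn2pos : (0:ℝ) < (n:ℝ)^2 := by positivity
  -- trivial case m = 0
  rcases Nat.eq_zero_or_pos m with hm0 | hm1
  · subst hm0
    simp only [Nat.cast_zero]
    have h1 : 0 ≤ (k:ℝ)^n / (n:ℝ)^2 := by positivity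
    have h2 : 0 ≤ (k:ℝ)^n / D := le_of_lt (div_pos hkn_pos hpos)
    linarith
  -- choose the threshold d
  set d : ℕ := (⌊D⌋).toNat - 1 with hd
  have hfl0 : 0 ≤ ⌊D⌋ := Int.floor_nonneg.2 (le_of_lt hpos)
  have hd1 : (d:ℝ) ≤ D := by
    rcases Nat.eq_zero_or_pos (⌊D⌋).toNat with h0 | h1
    · rw [hd, h0]; simp; exact le_of_lt hpos
    · have : (1:ℤ) ≤ ⌊D⌋ := by omega
      have hc : ((⌊D⌋).toNat : ℝ) = (⌊D⌋ : ℝ) := by exact_mod_cast Int.toNat_of_nonneg hfl0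
      have hdval : (d:ℕ) = (⌊D⌋).toNat - 1 := hd
      have : (d:ℝ) = ((⌊D⌋).toNat : ℝ) - 1 := by
        rw [hd]
        have : 1 ≤ (⌊D⌋).toNat := h1
        push_cast [Nat.cast_sub this]
        ring
      rw [this, hc]
      have := Int.floor_le D
      linarith
  have hd2 : D ≤ (d:ℝ) + 2 := by
    rcases Nat.eq_zero_or_pos (⌊D⌋).toNat with h0 | h1
    · have hfl : ⌊D⌋ = 0 := by omega
      have hlt := Int.lt_floor_add_one D
      rw [hfl] at hlt
      norm_num at hlt
      rw [hd, h0]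
      push_cast
      linarith
    · have hc : ((⌊D⌋).toNat : ℝ) = (⌊D⌋ : ℝ) := by exact_mod_cast Int.toNat_of_nonneg hfl0
      have hdr : (d:ℝ) = ((⌊D⌋).toNat : ℝ) - 1 := by
        rw [hd]
        push_cast [Nat.cast_sub h1]
        ring
      have := Int.lt_floor_add_one D
      rw [hdr, hc]
      linarith
  have hsqrt_nonneg : 0 ≤ Real.sqrt (n * Real.log n) := Real.sqrt_nonneg _
  have hd3 : (d:ℝ) ≤ ((k:ℝ)-1)/k * n := by rw [hD] at hd1; linarith
  -- basic setup
  set L := p.L with hL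
  have hinj : Function.Injective p.σ := by
    intro t t' h
    by_contra hne
    rcases lt_or_gt_of_ne hne with hlt | hlt
    · obtain ⟨s, _, hne2, _⟩ := p.nonincl t t' hlt
      exact hne2 (by rw [h])
    · obtain ⟨s, _, hne2, _⟩ := p.nonincl t' t hlt
      exact hne2 (by rw [h])
  have hLkn : L ≤ k^n := by
    have := Fintype.card_le_of_injective p.σ hinj
    simpa [Fintype.card_fun] using this
  -- finset of improvement states
  set St : Fin L → Finset (Fin n) :=
    fun t => Finset.univ.filter (fun s => ∃ a, (s, a) ∈ p.T t) with hStdef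
  have hSt : ∀ t s, s ∈ St t ↔ ∃ a, (s, a) ∈ p.T t := by
    intro t s; simp [hStdef]
  have hncard : ∀ t, {s | ∃ a, (s, a) ∈ p.T t}.ncard = (St t).card := by
    intro t
    rw [← Set.ncard_coe_finset (St t)]
    congr 1
    ext s
    simp [hStdef]
  -- index helpers
  set fin : ℕ → Fin m := fun j => if h : j < m then ⟨j, h⟩ else ⟨0, hm1⟩ with hfin
  set c : ℕ → ℕ := fun j => (St (p.idx (fin j))).card with hc
  set e : ℕ → ℕ := fun j => if h : j < m then (p.idx ⟨j, h⟩ : ℕ) else L with he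
  have hgap : ∀ j, j + 1 < m → e j + c j + 1 ≤ e (j+1) := by
    intro j hj
    have hjm : j < m := Nat.lt_of_succ_lt hj
    have := p.jump j hj
    rw [hncard] at this
    simp only [he, hc, hfin, dif_pos hjm, dif_pos hj]
    exact this
  have htel : ∀ r, r ≤ m - 1 → ∑ j ∈ Finset.range r, (c j + 1) ≤ e r := by
    intro r
    induction r with
    | zero => intro _; simp
    | succ r ih =>
      intro hr
      have hrm : r + 1 < m := by omega
      have h1 : r ≤ m - 1 := by omega
      rw [Finset.sum_range_succ]
      calc ∑ j ∈ Finset.range r, (c j + 1) + (c r + 1) ≤ e r + (c r + 1) := by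
            have := ih h1; omega
        _ ≤ e (r+1) := by have := hgap r hrm; omega
  have htel2 : ∑ j ∈ Finset.range (m-1), (c j + 1) ≤ L - 1 := by
    rcases Nat.eq_zero_or_pos (m - 1) with h0 | h1
    · rw [h0]; simp
    · have hm1m : m - 1 < m := by omega
      calc ∑ j ∈ Finset.range (m-1), (c j + 1) ≤ e (m-1) := htel (m-1) le_rfl
        _ ≤ L - 1 := by
            simp only [he, dif_pos hm1m]
            have := (p.idx ⟨m-1, hm1m⟩).isLt
            omega
  -- small and big index sets
  set Jsmall := (Finset.range (m-1)).filter (fun j => c j ≤ d) with hJsmall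
  set Jbig := (Finset.range (m-1)).filter (fun j => ¬ (c j ≤ d)) with hJbig
  have hsplit : Jsmall.card + Jbig.card = m - 1 := by
    rw [hJsmall, hJbig]
    rw [Finset.card_filter_add_card_filter_not]
    · exact Finset.card_range _
  -- big bound
  have hbig : Jbig.card * (d + 2) ≤ k^n := by
    calc Jbig.card * (d + 2) = ∑ _j ∈ Jbig, (d + 2) := by rw [Finset.sum_const, smul_eq_mul]
      _ ≤ ∑ j ∈ Jbig, (c j + 1) := by
          apply Finset.sum_le_sum
          intro j hj
          have h9 := (Finset.mem_filter.1 hj).2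
          simp only [hc] at h9 ⊢
          omega
      _ ≤ ∑ j ∈ Finset.range (m-1), (c j + 1) := by
          apply Finset.sum_le_sum_of_subset (Finset.filter_subset _ _)
      _ ≤ L - 1 := htel2
      _ ≤ k^n := le_trans (Nat.sub_le _ _) hLkn
  -- small bound
  set 𝒮 : Finset (Finset (Fin n)) :=
    (Finset.range (d+1)).biUnion (fun i => Finset.powersetCard i Finset.univ) with h𝒮
  have hsmallsum : Jsmall.card ≤ ∑ S ∈ 𝒮, (k-1)^S.card := by
    have hmap : ∀ j ∈ Jsmall, St (p.idx (fin j)) ∈ 𝒮 := by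
      intro j hj
      have hcj : c j ≤ d := (Finset.mem_filter.1 hj).2
      simp only [hc] at hcj
      rw [h𝒮, Finset.mem_biUnion]
      exact ⟨(St (p.idx (fin j))).card, Finset.mem_range.2 (by omega),
        Finset.mem_powersetCard.2 ⟨Finset.subset_univ _, rfl⟩⟩
    rw [Finset.card_eq_sum_card_fiberwise hmap]
    apply Finset.sum_le_sum
    intro S _
    set fib := Jsmall.filter (fun j => St (p.idx (fin j)) = S) with hfib
    set cl := fib.image (fun j => p.idx (fin j)) with hcl
    have hinj2 : Set.InjOn (fun j => p.idx (fin j)) fib := by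
      intro a ha b hb hab
      have haR : a < m - 1 := Finset.mem_range.1 (Finset.mem_of_mem_filter _ (Finset.mem_of_mem_filter _ ha))
      have hbR : b < m - 1 := Finset.mem_range.1 (Finset.mem_of_mem_filter _ (Finset.mem_of_mem_filter _ hb))
      have ham : a < m := by omega
      have hbm : b < m := by omega
      have := p.idx_mono.injective hab
      simp only [hfin, dif_pos ham, dif_pos hbm] at this
      exact Fin.mk.injEq _ _ _ _ ▸ (by injection this)
    have hcard : fib.card = cl.card := (Finset.card_image_of_injOn hinj2).symm
    rw [hcard]
    apply count_class hk p.σ p.T St hSt p.hT p.nonincl S cl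
    intro t ht
    obtain ⟨j, hj, rfl⟩ := Finset.mem_image.1 ht
    exact (Finset.mem_filter.1 hj).2
  have hSsum : ∑ S ∈ 𝒮, (k-1)^S.card = ∑ i ∈ Finset.range (d+1), n.choose i * (k-1)^i := by
    rw [h𝒮, Finset.sum_biUnion]
    · apply Finset.sum_congr rfl
      intro i _
      rw [Finset.sum_congr rfl (fun S hS => by
        rw [(Finset.mem_powersetCard.1 hS).2])]
      rw [Finset.sum_const, smul_eq_mul, Finset.card_powersetCard, Finset.card_univ,
        Fintype.card_fin]
    · intro i _ j _ hij
      apply Finset.disjoint_left.2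
      intro S hSi hSj
      exact hij (((Finset.mem_powersetCard.1 hSi).2).symm.trans (Finset.mem_powersetCard.1 hSj).2)
  -- real versions
  have hlogpos : 0 < Real.log n := Real.log_pos hn1
  have hnlog_nonneg : (0:ℝ) ≤ (n:ℝ) * Real.log n := by positivity
  have hsmallR : (Jsmall.card : ℝ) ≤ (k:ℝ)^n / (n:ℝ)^2 := by
    have h1 : (Jsmall.card : ℝ) ≤ ∑ i ∈ Finset.range (d+1), (n.choose i : ℝ) * ((k:ℝ)-1)^i := by
      have := hsmallsum
      rw [hSsum] at this
      calc (Jsmall.card : ℝ) ≤ ((∑ i ∈ Finset.range (d+1), n.choose i * (k-1)^i : ℕ) : ℝ) := by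
            exact_mod_cast this
        _ = ∑ i ∈ Finset.range (d+1), (n.choose i : ℝ) * ((k:ℝ)-1)^i := by
            push_cast [Nat.cast_sub (by omega : 1 ≤ k)]
            ring_nf
    have h2 := tail_bound n k d (by omega) hk hd3
    have h3 : Real.exp (-2*(((k:ℝ)-1)/k * n - d)^2 / n) ≤ Real.exp (-2 * Real.log n) := by
      apply Real.exp_le_exp.2
      have ht : Real.sqrt ((n:ℝ) * Real.log n) ≤ ((k:ℝ)-1)/k * n - d := by
        rw [hD] at hd1; linarith
      have ht2 : (n:ℝ) * Real.log n ≤ (((k:ℝ)-1)/k * n - d)^2 := by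
        have := Real.sq_sqrt hnlog_nonneg
        nlinarith [hsqrt_nonneg]
      rw [div_le_iff₀ (by linarith : (0:ℝ) < (n:ℝ))]
      nlinarith
    have h4 : Real.exp (-2 * Real.log n) = 1 / (n:ℝ)^2 := by
      rw [show (-2 : ℝ) * Real.log n = Real.log (((n:ℝ)^2)⁻¹) by
        rw [Real.log_inv, Real.log_pow]; push_cast; ring]
      rw [Real.exp_log (by positivity)]
      rw [one_div]
    calc (Jsmall.card : ℝ) ≤ (k:ℝ)^n * Real.exp (-2*(((k:ℝ)-1)/k * n - d)^2 / n) :=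
          le_trans h1 h2
      _ ≤ (k:ℝ)^n * (1 / (n:ℝ)^2) := by
          rw [← h4]
          exact mul_le_mul_of_nonneg_left h3 (le_of_lt hkn_pos)
      _ = (k:ℝ)^n / (n:ℝ)^2 := by ring
  have hbigR : (Jbig.card : ℝ) ≤ (k:ℝ)^n / D := by
    have h1 : (Jbig.card : ℝ) * ((d:ℝ) + 2) ≤ (k:ℝ)^n := by
      have : ((Jbig.card * (d + 2) : ℕ) : ℝ) ≤ ((k^n : ℕ) : ℝ) := by exact_mod_cast hbig
      push_cast at this
      linarith
    have hd2pos : (0:ℝ) < (d:ℝ) + 2 := by positivity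
    calc (Jbig.card : ℝ) ≤ (k:ℝ)^n / ((d:ℝ) + 2) := by
          rw [le_div_iff₀ hd2pos]; linarith
      _ ≤ (k:ℝ)^n / D := by
          apply div_le_div_of_nonneg_left (le_of_lt hkn_pos) hpos hd2
  -- conclude
  have hmsum : (m : ℝ) ≤ (Jsmall.card : ℝ) + (Jbig.card : ℝ) + 1 := by
    have : m ≤ Jsmall.card + Jbig.card + 1 := by omega
    exact_mod_cast this
  calc (m:ℝ) ≤ (Jsmall.card : ℝ) + (Jbig.card : ℝ) + 1 := hmsum
    _ ≤ (k:ℝ)^n / (n:ℝ)^2 + (k:ℝ)^n / D + 1 := by linarith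
end PseudoPIAux
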